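/- A triple (S₁,S₂,S₃) of nonempty sets of two-bit labels is a maximal triple satisfying the universal quantifier with respect to the family of valid bit configurations if and only if it is, up to permutation of the three components, one of the following 22 triples: ({00,10,11},{00},{00}); ({01,10,11},{00},{01}); ({00,10,11},{01},{01}); ({00,01,11},{00},{10}); ({00,01,10},{00},{11}); ({00,01,10},{01},{10}); ({00,01,11},{01},{11}); ({01,10,11},{10},{10}); ({00,10,11},{10},{11}); ({01,10,11},{11},{11}); ({00,10},{00},{00,11}); ({01,11},{00},{01,10}); ({00,10},{01},{01,10}); ({01,11},{00,11},{01}); ({00,10},{01,11},{10}); ({11},{00,10},{00,10}); ({10},{01,10},{01,10}); ({10},{00,11},{00,11}); ({00,11},{01,10},{11}); ({11},{01,11},{01,11}); ({10,11},{00,01},{00,01}); ({10,11},{10,11},{10,11}). -/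

import Mathlib

/-- A two-bit label: the first component is the input bit, the second the output bit. -/
abbrev TwoBit := Bool × Bool

/-- A size-3 (multiset of) two-bit labels is a valid bit configuration if, whenever the
number of input bits equal to 1 is even, the XOR of the output bits equals the OR of the
input bits. (This predicate is symmetric in its three arguments.) -/
def validBit (l₁ l₂ l₃ : TwoBit) : Prop :=
  (l₁.1.toNat + l₂.1.toNat + l₃.1.toNat) % 2 = 0 →
    Bool.xor l₁.2 (Bool.xor l₂.2 l₃.2) = (l₁.1 || l₂.1 || l₃.1)

/-- A triple of sets of two-bit labels satisfies the universal quantifier if every choice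
of one label per component is a valid bit configuration. -/
def bitUQ (S : Fin 3 → Set TwoBit) : Prop :=
  ∀ l₁ ∈ S 0, ∀ l₂ ∈ S 1, ∀ l₃ ∈ S 2, validBit l₁ l₂ l₃

def b00 : TwoBit := (false, false)
def b01 : TwoBit := (false, true)
def b10 : TwoBit := (true, false)
def b11 : TwoBit := (true, true)

/-- The 22 maximal bit triples. -/
def bitTriples : List (Fin 3 → Set TwoBit) :=
  [ ![{b00, b10, b11}, {b00}, {b00}],
    ![{b01, b10, b11}, {b00}, {b01}],
    ![{b00, b10, b11}, {b01}, {b01}],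
    ![{b00, b01, b11}, {b00}, {b10}],
    ![{b00, b01, b10}, {b00}, {b11}],
    ![{b00, b01, b10}, {b01}, {b10}],
    ![{b00, b01, b11}, {b01}, {b11}],
    ![{b01, b10, b11}, {b10}, {b10}],
    ![{b00, b10, b11}, {b10}, {b11}],
    ![{b01, b10, b11}, {b11}, {b11}],
    ![{b00, b10}, {b00}, {b00, b11}],
    ![{b01, b11}, {b00}, {b01, b10}],
    ![{b00, b10}, {b01}, {b01, b10}],
    ![{b01, b11}, {b00, b11}, {b01}],
    ![{b00, b10}, {b01, b11}, {b10}],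
    ![{b11}, {b00, b10}, {b00, b10}],
    ![{b10}, {b01, b10}, {b01, b10}],
    ![{b10}, {b00, b11}, {b00, b11}],
    ![{b00, b11}, {b01, b10}, {b11}],
    ![{b11}, {b01, b11}, {b01, b11}],
    ![{b10, b11}, {b00, b01}, {b00, b01}],
    ![{b10, b11}, {b10, b11}, {b10, b11}] ]


/-! ### Auxiliary machinery -/

instance : ∀ l₁ l₂ l₃, Decidable (validBit l₁ l₂ l₃) := fun _ _ _ => by
  unfold validBit; infer_instance

def mbtIdx (j : Fin 3) (t : TwoBit) : Nat := 4 * j.val + 2 * t.1.toNat + t.2.toNat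

def mbtDec (n : Nat) : Fin 3 → TwoBit → Bool := fun j t => n.testBit (mbtIdx j t)

def mbtEnc (F : Fin 3 → TwoBit → Bool) : Nat :=
  (F 0 (false,false)).toNat ||| (F 0 (false,true)).toNat <<< 1 |||
  (F 0 (true,false)).toNat <<< 2 ||| (F 0 (true,true)).toNat <<< 3 |||
  (F 1 (false,false)).toNat <<< 4 ||| (F 1 (false,true)).toNat <<< 5 |||
  (F 1 (true,false)).toNat <<< 6 ||| (F 1 (true,true)).toNat <<< 7 |||
  (F 2 (false,false)).toNat <<< 8 ||| (F 2 (false,true)).toNat <<< 9 |||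
  (F 2 (true,false)).toNat <<< 10 ||| (F 2 (true,true)).toNat <<< 11

def mbtMemF (G : TwoBit → Bool) : Set TwoBit := {t | G t = true}

def mbtM (F : Fin 3 → TwoBit → Bool) : Fin 3 → Set TwoBit := fun j => mbtMemF (F j)

def mbtUQ (F : Fin 3 → TwoBit → Bool) : Prop :=
  ∀ l₁ l₂ l₃ : TwoBit, F 0 l₁ = true → F 1 l₂ = true → F 2 l₃ = true → validBit l₁ l₂ l₃

def mbtAdd (F : Fin 3 → TwoBit → Bool) (j : Fin 3) (t : TwoBit) : Fin 3 → TwoBit → Bool :=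
  fun i s => F i s || (decide (i = j) && decide (s = t))

def mbtMX (F : Fin 3 → TwoBit → Bool) : Prop :=
  ∀ (j : Fin 3) (t : TwoBit), F j t = false → ¬ mbtUQ (mbtAdd F j t)

def mbtNE (F : Fin 3 → TwoBit → Bool) : Prop := ∀ j : Fin 3, ∃ t, F j t = true

def mbtPerms : List (Fin 3 → Fin 3) :=
  [![0,1,2], ![0,2,1], ![1,0,2], ![1,2,0], ![2,0,1], ![2,1,0]]

def mbtKeys : List Nat := [285, 542, 557, 1051, 2071, 1063, 2091, 1102, 2125, 2190, 2325, 1562, 1573, 666, 1189, 1368, 1636, 2452, 2153, 2728, 828, 3276]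

def mbtDF (F : Fin 3 → TwoBit → Bool) : Prop :=
  ∃ p ∈ mbtPerms, ∃ k ∈ mbtKeys, (fun j => F (p j)) = mbtDec k

def mbtBad : List (TwoBit × TwoBit × TwoBit) :=
  [ (((false, false) : TwoBit), ((false, false) : TwoBit), ((false, true) : TwoBit)),
    (((false, false) : TwoBit), ((false, true) : TwoBit), ((false, false) : TwoBit)),
    (((false, false) : TwoBit), ((true, false) : TwoBit), ((true, false) : TwoBit)),
    (((false, false) : TwoBit), ((true, true) : TwoBit), ((true, true) : TwoBit)),
    (((false, true) : TwoBit), ((false, false) : TwoBit), ((false, false) : TwoBit)),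
    (((false, true) : TwoBit), ((false, true) : TwoBit), ((false, true) : TwoBit)),
    (((false, true) : TwoBit), ((true, false) : TwoBit), ((true, true) : TwoBit)),
    (((false, true) : TwoBit), ((true, true) : TwoBit), ((true, false) : TwoBit)),
    (((true, false) : TwoBit), ((false, false) : TwoBit), ((true, false) : TwoBit)),
    (((true, false) : TwoBit), ((false, true) : TwoBit), ((true, true) : TwoBit)),
    (((true, false) : TwoBit), ((true, false) : TwoBit), ((false, false) : TwoBit)),
    (((true, false) : TwoBit), ((true, true) : TwoBit), ((false, true) : TwoBit)),
    (((true, true) : TwoBit), ((false, false) : TwoBit), ((true, true) : TwoBit)),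
    (((true, true) : TwoBit), ((false, true) : TwoBit), ((true, false) : TwoBit)),
    (((true, true) : TwoBit), ((true, false) : TwoBit), ((false, true) : TwoBit)),
    (((true, true) : TwoBit), ((true, true) : TwoBit), ((false, false) : TwoBit)) ]

def mbtJT : List (Fin 3 × TwoBit) :=
  [ ((0 : Fin 3), ((false, false) : TwoBit)),
    ((0 : Fin 3), ((false, true) : TwoBit)),
    ((0 : Fin 3), ((true, false) : TwoBit)),
    ((0 : Fin 3), ((true, true) : TwoBit)),
    ((1 : Fin 3), ((false, false) : TwoBit)),
    ((1 : Fin 3), ((false, true) : TwoBit)),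
    ((1 : Fin 3), ((true, false) : TwoBit)),
    ((1 : Fin 3), ((true, true) : TwoBit)),
    ((2 : Fin 3), ((false, false) : TwoBit)),
    ((2 : Fin 3), ((false, true) : TwoBit)),
    ((2 : Fin 3), ((true, false) : TwoBit)),
    ((2 : Fin 3), ((true, true) : TwoBit)) ]

def uqB (n : Nat) : Bool :=
  mbtBad.all fun b => !(mbtDec n 0 b.1 && mbtDec n 1 b.2.1 && mbtDec n 2 b.2.2)

def neB (n : Nat) : Bool :=
  ([0,1,2] : List (Fin 3)).all fun j =>
    ([(false,false),(false,true),(true,false),(true,true)] : List TwoBit).any fun t =>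
      mbtDec n j t

def mxB (n : Nat) : Bool :=
  mbtJT.all fun q => mbtDec n q.1 q.2 || !uqB (n ||| 2 ^ (mbtIdx q.1 q.2))

def mbtNib (n j : Nat) : Nat := (n >>> (4 * j)) &&& 15

def mbtKey (p : Fin 3 → Fin 3) (n : Nat) : Nat :=
  mbtNib n (p 0).val ||| mbtNib n (p 1).val <<< 4 ||| mbtNib n (p 2).val <<< 8

def dfB (n : Nat) : Bool :=
  mbtPerms.any fun p => mbtKeys.any fun k => mbtKey p n == k

def okB (n : Nat) : Bool := !(neB n) || ((uqB n && mxB n) == dfB n)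

/-! ### The finite verification -/

set_option maxHeartbeats 8000000 in
set_option maxRecDepth 40000 in
theorem mbtChunk0 : (List.range 512).all (fun i => okB (0 + i)) = true := by decide

set_option maxHeartbeats 8000000 in
set_option maxRecDepth 40000 in
theorem mbtChunk1 : (List.range 512).all (fun i => okB (512 + i)) = true := by decide

set_option maxHeartbeats 8000000 in
set_option maxRecDepth 40000 in
theorem mbtChunk2 : (List.range 512).all (fun i => okB (1024 + i)) = true := by decide

set_option maxHeartbeats 8000000 in
set_option maxRecDepth 40000 in
theorem mbtChunk3 : (List.range 512).all (fun i => okB (1536 + i)) = true := by decide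

set_option maxHeartbeats 8000000 in
set_option maxRecDepth 40000 in
theorem mbtChunk4 : (List.range 512).all (fun i => okB (2048 + i)) = true := by decide

set_option maxHeartbeats 8000000 in
set_option maxRecDepth 40000 in
theorem mbtChunk5 : (List.range 512).all (fun i => okB (2560 + i)) = true := by decide

set_option maxHeartbeats 8000000 in
set_option maxRecDepth 40000 in
theorem mbtChunk6 : (List.range 512).all (fun i => okB (3072 + i)) = true := by decide

set_option maxHeartbeats 8000000 in
set_option maxRecDepth 40000 in
theorem mbtChunk7 : (List.range 512).all (fun i => okB (3584 + i)) = true := by decide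

lemma mbtAllAux (c : Nat) (hc : (List.range 512).all (fun i => okB (c + i)) = true) :
    ∀ i < 512, okB (c + i) = true := fun i hi =>
  List.all_eq_true.mp hc i (List.mem_range.mpr hi)

theorem mbtCoreP : ∀ n < 4096, okB n = true := by
  intro n hn
  rcases Nat.lt_or_ge n 512 with h|h
  · have := mbtAllAux 0 mbtChunk0 (n - 0) (by omega)
    rwa [show 0 + (n - 0) = n by omega] at this
  rcases Nat.lt_or_ge n 1024 with h|h
  · have := mbtAllAux 512 mbtChunk1 (n - 512) (by omega)
    rwa [show 512 + (n - 512) = n by omega] at this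
  rcases Nat.lt_or_ge n 1536 with h|h
  · have := mbtAllAux 1024 mbtChunk2 (n - 1024) (by omega)
    rwa [show 1024 + (n - 1024) = n by omega] at this
  rcases Nat.lt_or_ge n 2048 with h|h
  · have := mbtAllAux 1536 mbtChunk3 (n - 1536) (by omega)
    rwa [show 1536 + (n - 1536) = n by omega] at this
  rcases Nat.lt_or_ge n 2560 with h|h
  · have := mbtAllAux 2048 mbtChunk4 (n - 2048) (by omega)
    rwa [show 2048 + (n - 2048) = n by omega] at this
  rcases Nat.lt_or_ge n 3072 with h|h
  · have := mbtAllAux 2560 mbtChunk5 (n - 2560) (by omega)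
    rwa [show 2560 + (n - 2560) = n by omega] at this
  rcases Nat.lt_or_ge n 3584 with h|h
  · have := mbtAllAux 3072 mbtChunk6 (n - 3072) (by omega)
    rwa [show 3072 + (n - 3072) = n by omega] at this
  have := mbtAllAux 3584 mbtChunk7 (n - 3584) (by omega)
  rwa [show 3584 + (n - 3584) = n by omega] at this

/-! ### Small decidable facts -/

lemma mbtBad_iff (l₁ l₂ l₃ : TwoBit) : (l₁, l₂, l₃) ∈ mbtBad ↔ ¬ validBit l₁ l₂ l₃ := by
  revert l₁ l₂ l₃; decide

lemma mbtJT_complete (j : Fin 3) (t : TwoBit) : (j, t) ∈ mbtJT := by revert j t; decide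

lemma mbtFin3_complete (j : Fin 3) : j ∈ ([0,1,2] : List (Fin 3)) := by revert j; decide

lemma mbtTB_complete (t : TwoBit) :
    t ∈ ([(false,false),(false,true),(true,false),(true,true)] : List TwoBit) := by
  revert t; decide

lemma mbtIdx_inj (i j : Fin 3) (s t : TwoBit) :
    mbtIdx j t = mbtIdx i s ↔ (j = i ∧ t = s) := by revert i j s t; decide

lemma mbtIdx_surj : ∀ i < 12, ∃ j t, mbtIdx j t = i := by decide

lemma mbtKeys_lt : ∀ k ∈ mbtKeys, k < 4096 := by decide

lemma mbtPerm_mem (f : Fin 3 → Fin 3) (hf : ∀ a b : Fin 3, f a = f b → a = b) :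
    f ∈ mbtPerms := by revert f; decide

/-! ### Nat bit lemmas -/

lemma mbt15 (k : Nat) : (15 : Nat).testBit k = decide (k < 4) := by
  have h : (15 : Nat) = 2 ^ 4 - 1 := by norm_num
  rw [h, Nat.testBit_two_pow_sub_one]

lemma mbtToNatTestBit (b : Bool) (k : Nat) : b.toNat.testBit k = (b && decide (k = 0)) := by
  cases b
  · simp [Bool.toNat, Nat.zero_testBit]
  · show (1 : Nat).testBit k = (true && decide (k = 0))
    rw [show (1 : Nat) = 2 ^ 0 from rfl, Nat.testBit_two_pow]
    simp [eq_comm]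

lemma mbtOrLt {x y : Nat} (hx : x < 4096) (hy : y < 4096) : x ||| y < 4096 := by
  have h : (4096 : Nat) = 2 ^ 12 := by norm_num
  rw [h] at hx hy ⊢
  exact Nat.or_lt_two_pow hx hy

lemma mbtSlLt (b : Bool) (k : Nat) (hk : k ≤ 11) : b.toNat <<< k < 4096 := by
  rw [Nat.shiftLeft_eq]
  calc b.toNat * 2 ^ k ≤ 1 * 2 ^ k := Nat.mul_le_mul_right _ (Bool.toNat_le b)
    _ = 2 ^ k := one_mul _
    _ ≤ 2 ^ 11 := Nat.pow_le_pow_right (by norm_num) hk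
    _ < 4096 := by norm_num

lemma mbtEnc_lt (F : Fin 3 → TwoBit → Bool) : mbtEnc F < 4096 := by
  unfold mbtEnc
  repeat
    first
    | exact Nat.lt_of_le_of_lt (Bool.toNat_le _) (by norm_num)
    | exact mbtSlLt _ _ (by norm_num)
    | apply mbtOrLt

lemma mbtEncB0 (F : Fin 3 → TwoBit → Bool) :
    (mbtEnc F).testBit 0 = F 0 (false, false) := by
  simp [mbtEnc, Nat.testBit_or, Nat.testBit_shiftLeft, mbtToNatTestBit]
  cases F 0 (false, false) <;> rfl

lemma mbtEncB1 (F : Fin 3 → TwoBit → Bool) :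
    (mbtEnc F).testBit 1 = F 0 (false, true) := by
  simp [mbtEnc, Nat.testBit_or, Nat.testBit_shiftLeft, mbtToNatTestBit]
  cases F 0 (false, true) <;> rfl

lemma mbtEncB2 (F : Fin 3 → TwoBit → Bool) :
    (mbtEnc F).testBit 2 = F 0 (true, false) := by
  simp [mbtEnc, Nat.testBit_or, Nat.testBit_shiftLeft, mbtToNatTestBit]
  cases F 0 (true, false) <;> rfl

lemma mbtEncB3 (F : Fin 3 → TwoBit → Bool) :
    (mbtEnc F).testBit 3 = F 0 (true, true) := by
  simp [mbtEnc, Nat.testBit_or, Nat.testBit_shiftLeft, mbtToNatTestBit]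
  cases F 0 (true, true) <;> rfl

lemma mbtEncB4 (F : Fin 3 → TwoBit → Bool) :
    (mbtEnc F).testBit 4 = F 1 (false, false) := by
  simp [mbtEnc, Nat.testBit_or, Nat.testBit_shiftLeft, mbtToNatTestBit]
  cases F 1 (false, false) <;> rfl

lemma mbtEncB5 (F : Fin 3 → TwoBit → Bool) :
    (mbtEnc F).testBit 5 = F 1 (false, true) := by
  simp [mbtEnc, Nat.testBit_or, Nat.testBit_shiftLeft, mbtToNatTestBit]
  cases F 1 (false, true) <;> rfl

lemma mbtEncB6 (F : Fin 3 → TwoBit → Bool) :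
    (mbtEnc F).testBit 6 = F 1 (true, false) := by
  simp [mbtEnc, Nat.testBit_or, Nat.testBit_shiftLeft, mbtToNatTestBit]
  cases F 1 (true, false) <;> rfl

lemma mbtEncB7 (F : Fin 3 → TwoBit → Bool) :
    (mbtEnc F).testBit 7 = F 1 (true, true) := by
  simp [mbtEnc, Nat.testBit_or, Nat.testBit_shiftLeft, mbtToNatTestBit]
  cases F 1 (true, true) <;> rfl

lemma mbtEncB8 (F : Fin 3 → TwoBit → Bool) :
    (mbtEnc F).testBit 8 = F 2 (false, false) := by
  simp [mbtEnc, Nat.testBit_or, Nat.testBit_shiftLeft, mbtToNatTestBit]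
  cases F 2 (false, false) <;> rfl

lemma mbtEncB9 (F : Fin 3 → TwoBit → Bool) :
    (mbtEnc F).testBit 9 = F 2 (false, true) := by
  simp [mbtEnc, Nat.testBit_or, Nat.testBit_shiftLeft, mbtToNatTestBit]
  cases F 2 (false, true) <;> rfl

lemma mbtEncB10 (F : Fin 3 → TwoBit → Bool) :
    (mbtEnc F).testBit 10 = F 2 (true, false) := by
  simp [mbtEnc, Nat.testBit_or, Nat.testBit_shiftLeft, mbtToNatTestBit]
  cases F 2 (true, false) <;> rfl

lemma mbtEncB11 (F : Fin 3 → TwoBit → Bool) :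
    (mbtEnc F).testBit 11 = F 2 (true, true) := by
  simp [mbtEnc, Nat.testBit_or, Nat.testBit_shiftLeft, mbtToNatTestBit]
  cases F 2 (true, true) <;> rfl

lemma mbtDecEnc (F : Fin 3 → TwoBit → Bool) : mbtDec (mbtEnc F) = F := by
  funext j t
  fin_cases j <;> rcases t with ⟨x, y⟩ <;> cases x <;> cases y
  · show (mbtEnc F).testBit 0 = F 0 (false, false)
    exact mbtEncB0 F
  · show (mbtEnc F).testBit 1 = F 0 (false, true)
    exact mbtEncB1 F
  · show (mbtEnc F).testBit 2 = F 0 (true, false)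
    exact mbtEncB2 F
  · show (mbtEnc F).testBit 3 = F 0 (true, true)
    exact mbtEncB3 F
  · show (mbtEnc F).testBit 4 = F 1 (false, false)
    exact mbtEncB4 F
  · show (mbtEnc F).testBit 5 = F 1 (false, true)
    exact mbtEncB5 F
  · show (mbtEnc F).testBit 6 = F 1 (true, false)
    exact mbtEncB6 F
  · show (mbtEnc F).testBit 7 = F 1 (true, true)
    exact mbtEncB7 F
  · show (mbtEnc F).testBit 8 = F 2 (false, false)
    exact mbtEncB8 F
  · show (mbtEnc F).testBit 9 = F 2 (false, true)
    exact mbtEncB9 F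
  · show (mbtEnc F).testBit 10 = F 2 (true, false)
    exact mbtEncB10 F
  · show (mbtEnc F).testBit 11 = F 2 (true, true)
    exact mbtEncB11 F

lemma mbtAddDec (n : Nat) (j : Fin 3) (t : TwoBit) :
    mbtAdd (mbtDec n) j t = mbtDec (n ||| 2 ^ mbtIdx j t) := by
  funext i s
  simp only [mbtAdd, mbtDec, Nat.testBit_or, Nat.testBit_two_pow]
  congr 1
  apply (by decide : ∀ x y : Bool, (x = true ↔ y = true) → x = y)
  simp only [Bool.and_eq_true, decide_eq_true_eq, mbtIdx_inj i j s t]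
  constructor
  · rintro ⟨a, b⟩
    exact ⟨a.symm, b.symm⟩
  · rintro ⟨a, b⟩
    exact ⟨a.symm, b.symm⟩

lemma mbtKeyTestBit (p : Fin 3 → Fin 3) (n : Nat) (j : Fin 3) (t : TwoBit) :
    (mbtKey p n).testBit (mbtIdx j t) = n.testBit (mbtIdx (p j) t) := by
  fin_cases j <;> rcases t with ⟨x, y⟩ <;> cases x <;> cases y
  · show (mbtKey p n).testBit 0 = n.testBit (mbtIdx (p 0) (false, false))
    simp [mbtKey, mbtNib, mbtIdx, Nat.testBit_or, Nat.testBit_shiftLeft, Nat.testBit_shiftRight,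
      Nat.testBit_land, mbt15]
    all_goals first
    | rfl
    | exact congrArg (Nat.testBit n) (by omega)
  · show (mbtKey p n).testBit 1 = n.testBit (mbtIdx (p 0) (false, true))
    simp [mbtKey, mbtNib, mbtIdx, Nat.testBit_or, Nat.testBit_shiftLeft, Nat.testBit_shiftRight,
      Nat.testBit_land, mbt15]
    all_goals first
    | rfl
    | exact congrArg (Nat.testBit n) (by omega)
  · show (mbtKey p n).testBit 2 = n.testBit (mbtIdx (p 0) (true, false))
    simp [mbtKey, mbtNib, mbtIdx, Nat.testBit_or, Nat.testBit_shiftLeft, Nat.testBit_shiftRight,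
      Nat.testBit_land, mbt15]
    all_goals first
    | rfl
    | exact congrArg (Nat.testBit n) (by omega)
  · show (mbtKey p n).testBit 3 = n.testBit (mbtIdx (p 0) (true, true))
    simp [mbtKey, mbtNib, mbtIdx, Nat.testBit_or, Nat.testBit_shiftLeft, Nat.testBit_shiftRight,
      Nat.testBit_land, mbt15]
    all_goals first
    | rfl
    | exact congrArg (Nat.testBit n) (by omega)
  · show (mbtKey p n).testBit 4 = n.testBit (mbtIdx (p 1) (false, false))
    simp [mbtKey, mbtNib, mbtIdx, Nat.testBit_or, Nat.testBit_shiftLeft, Nat.testBit_shiftRight,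
      Nat.testBit_land, mbt15]
    all_goals first
    | rfl
    | exact congrArg (Nat.testBit n) (by omega)
  · show (mbtKey p n).testBit 5 = n.testBit (mbtIdx (p 1) (false, true))
    simp [mbtKey, mbtNib, mbtIdx, Nat.testBit_or, Nat.testBit_shiftLeft, Nat.testBit_shiftRight,
      Nat.testBit_land, mbt15]
    all_goals first
    | rfl
    | exact congrArg (Nat.testBit n) (by omega)
  · show (mbtKey p n).testBit 6 = n.testBit (mbtIdx (p 1) (true, false))
    simp [mbtKey, mbtNib, mbtIdx, Nat.testBit_or, Nat.testBit_shiftLeft, Nat.testBit_shiftRight,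
      Nat.testBit_land, mbt15]
    all_goals first
    | rfl
    | exact congrArg (Nat.testBit n) (by omega)
  · show (mbtKey p n).testBit 7 = n.testBit (mbtIdx (p 1) (true, true))
    simp [mbtKey, mbtNib, mbtIdx, Nat.testBit_or, Nat.testBit_shiftLeft, Nat.testBit_shiftRight,
      Nat.testBit_land, mbt15]
    all_goals first
    | rfl
    | exact congrArg (Nat.testBit n) (by omega)
  · show (mbtKey p n).testBit 8 = n.testBit (mbtIdx (p 2) (false, false))
    simp [mbtKey, mbtNib, mbtIdx, Nat.testBit_or, Nat.testBit_shiftLeft, Nat.testBit_shiftRight,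
      Nat.testBit_land, mbt15]
    all_goals first
    | rfl
    | exact congrArg (Nat.testBit n) (by omega)
  · show (mbtKey p n).testBit 9 = n.testBit (mbtIdx (p 2) (false, true))
    simp [mbtKey, mbtNib, mbtIdx, Nat.testBit_or, Nat.testBit_shiftLeft, Nat.testBit_shiftRight,
      Nat.testBit_land, mbt15]
    all_goals first
    | rfl
    | exact congrArg (Nat.testBit n) (by omega)
  · show (mbtKey p n).testBit 10 = n.testBit (mbtIdx (p 2) (true, false))
    simp [mbtKey, mbtNib, mbtIdx, Nat.testBit_or, Nat.testBit_shiftLeft, Nat.testBit_shiftRight,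
      Nat.testBit_land, mbt15]
    all_goals first
    | rfl
    | exact congrArg (Nat.testBit n) (by omega)
  · show (mbtKey p n).testBit 11 = n.testBit (mbtIdx (p 2) (true, true))
    simp [mbtKey, mbtNib, mbtIdx, Nat.testBit_or, Nat.testBit_shiftLeft, Nat.testBit_shiftRight,
      Nat.testBit_land, mbt15]
    all_goals first
    | rfl
    | exact congrArg (Nat.testBit n) (by omega)

lemma mbtKeyLt (p : Fin 3 → Fin 3) (n : Nat) : mbtKey p n < 4096 := by
  unfold mbtKey
  have hnib : ∀ m, mbtNib n m < 4096 :=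
    fun m => Nat.lt_of_le_of_lt Nat.and_le_right (by norm_num)
  have hsl : ∀ m k, k ≤ 8 → mbtNib n m <<< k < 4096 := by
    intro m k hk
    rw [Nat.shiftLeft_eq]
    calc mbtNib n m * 2 ^ k ≤ 15 * 2 ^ k :=
          Nat.mul_le_mul_right _ Nat.and_le_right
      _ ≤ 15 * 2 ^ 8 := Nat.mul_le_mul_left _ (Nat.pow_le_pow_right (by norm_num) hk)
      _ < 4096 := by norm_num
  exact mbtOrLt (mbtOrLt (hnib _) (hsl _ 4 (by norm_num))) (hsl _ 8 (by norm_num))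

lemma mbtKeyEq (p : Fin 3 → Fin 3) (n k : Nat) (hk : k < 4096) :
    mbtKey p n = k ↔ (fun j => mbtDec n (p j)) = mbtDec k := by
  constructor
  · intro h
    funext j t
    show mbtDec n (p j) t = mbtDec k j t
    unfold mbtDec
    rw [← h, mbtKeyTestBit]
  · intro h
    apply Nat.eq_of_testBit_eq
    intro i
    rcases Nat.lt_or_ge i 12 with hi | hi
    · obtain ⟨j, t, rfl⟩ := mbtIdx_surj i hi
      rw [mbtKeyTestBit]
      exact congrFun (congrFun h j) t
    · have h2 : (4096 : Nat) ≤ 2 ^ i := by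
        calc (4096 : Nat) = 2 ^ 12 := by norm_num
          _ ≤ 2 ^ i := Nat.pow_le_pow_right (by norm_num) hi
      rw [Nat.testBit_lt_two_pow (Nat.lt_of_lt_of_le (mbtKeyLt p n) h2),
        Nat.testBit_lt_two_pow (Nat.lt_of_lt_of_le hk h2)]

/-! ### Bridges between Bool checks and Props -/

lemma mbtUqIff (n : Nat) : uqB n = true ↔ mbtUQ (mbtDec n) := by
  rw [uqB, List.all_eq_true]
  constructor
  · intro h l₁ l₂ l₃ m₁ m₂ m₃
    by_contra hv
    have hb : (l₁, l₂, l₃) ∈ mbtBad := (mbtBad_iff l₁ l₂ l₃).mpr hv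
    have := h _ hb
    simp [m₁, m₂, m₃] at this
  · rintro h ⟨l₁, l₂, l₃⟩ hb
    have hv := (mbtBad_iff l₁ l₂ l₃).mp hb
    cases h1 : mbtDec n 0 l₁ <;> cases h2 : mbtDec n 1 l₂ <;> cases h3 : mbtDec n 2 l₃ <;>
      first
      | rfl
      | exact absurd (h _ _ _ h1 h2 h3) hv

lemma mbtNeIff (n : Nat) : neB n = true ↔ mbtNE (mbtDec n) := by
  rw [neB, List.all_eq_true]
  constructor
  · intro h j
    have hj := h j (mbtFin3_complete j)
    rw [List.any_eq_true] at hj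
    obtain ⟨t, _, ht⟩ := hj
    exact ⟨t, ht⟩
  · intro h j _
    rw [List.any_eq_true]
    obtain ⟨t, ht⟩ := h j
    exact ⟨t, mbtTB_complete t, ht⟩

lemma mbtMxIff (n : Nat) : mxB n = true ↔ mbtMX (mbtDec n) := by
  rw [mxB, List.all_eq_true]
  constructor
  · intro h j t hft huq
    have hq := h (j, t) (mbtJT_complete j t)
    rw [mbtAddDec] at huq
    have : uqB (n ||| 2 ^ mbtIdx j t) = true := (mbtUqIff _).mpr huq
    simp [hft, this] at hq
  · rintro h ⟨j, t⟩ _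
    show (mbtDec n j t || !uqB (n ||| 2 ^ mbtIdx j t)) = true
    cases hft : mbtDec n j t
    · have : ¬ uqB (n ||| 2 ^ mbtIdx j t) = true := by
        intro hu
        exact h j t hft (by rw [mbtAddDec]; exact (mbtUqIff _).mp hu)
      simp at this
      simp [this]
    · rfl

lemma mbtDfIff (n : Nat) : dfB n = true ↔ mbtDF (mbtDec n) := by
  rw [dfB, List.any_eq_true]
  constructor
  · rintro ⟨p, hp, hin⟩
    rw [List.any_eq_true] at hin
    obtain ⟨k, hk, he⟩ := hin
    rw [beq_iff_eq] at he
    exact ⟨p, hp, k, hk, (mbtKeyEq p n k (mbtKeys_lt k hk)).mp he⟩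
  · rintro ⟨p, hp, k, hk, he⟩
    refine ⟨p, hp, ?_⟩
    rw [List.any_eq_true]
    exact ⟨k, hk, beq_iff_eq.mpr ((mbtKeyEq p n k (mbtKeys_lt k hk)).mpr he)⟩

theorem mbtCoreF (F : Fin 3 → TwoBit → Bool) (hne : mbtNE F) :
    (mbtUQ F ∧ mbtMX F) ↔ mbtDF F := by
  have hd : mbtDec (mbtEnc F) = F := mbtDecEnc F
  have h := mbtCoreP (mbtEnc F) (mbtEnc_lt F)
  have hne' : neB (mbtEnc F) = true := (mbtNeIff _).mpr (by rw [hd]; exact hne)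
  rw [okB, hne'] at h
  simp only [Bool.not_true, Bool.false_or, beq_iff_eq] at h
  constructor
  · rintro ⟨hu, hm⟩
    have h1 : uqB (mbtEnc F) = true := (mbtUqIff _).mpr (by rw [hd]; exact hu)
    have h2 : mxB (mbtEnc F) = true := (mbtMxIff _).mpr (by rw [hd]; exact hm)
    have h3 : dfB (mbtEnc F) = true := by rw [← h, h1, h2]; rfl
    have := (mbtDfIff _).mp h3
    rwa [hd] at this
  · intro hdf
    have h3 : dfB (mbtEnc F) = true := (mbtDfIff _).mpr (by rw [hd]; exact hdf)
    rw [h3, Bool.and_eq_true] at h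
    constructor
    · have := (mbtUqIff _).mp h.1
      rwa [hd] at this
    · have := (mbtMxIff _).mp h.2
      rwa [hd] at this

/-! ### The 22 triples as decoded keys -/

lemma mbtE0 : mbtM (mbtDec 285) = ![{b00, b10, b11}, {b00}, {b00}] := by
  funext j
  fin_cases j
  · show mbtMemF (mbtDec 285 0) = ({b00, b10, b11} : Set TwoBit)
    ext t
    simp only [mbtMemF, Set.mem_setOf_eq, Set.mem_insert_iff, Set.mem_singleton_iff]
    revert t
    decide
  · show mbtMemF (mbtDec 285 1) = ({b00} : Set TwoBit)
    ext t
    simp only [mbtMemF, Set.mem_setOf_eq, Set.mem_insert_iff, Set.mem_singleton_iff]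
    revert t
    decide
  · show mbtMemF (mbtDec 285 2) = ({b00} : Set TwoBit)
    ext t
    simp only [mbtMemF, Set.mem_setOf_eq, Set.mem_insert_iff, Set.mem_singleton_iff]
    revert t
    decide

lemma mbtE1 : mbtM (mbtDec 542) = ![{b01, b10, b11}, {b00}, {b01}] := by
  funext j
  fin_cases j
  · show mbtMemF (mbtDec 542 0) = ({b01, b10, b11} : Set TwoBit)
    ext t
    simp only [mbtMemF, Set.mem_setOf_eq, Set.mem_insert_iff, Set.mem_singleton_iff]
    revert t
    decide
  · show mbtMemF (mbtDec 542 1) = ({b00} : Set TwoBit)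
    ext t
    simp only [mbtMemF, Set.mem_setOf_eq, Set.mem_insert_iff, Set.mem_singleton_iff]
    revert t
    decide
  · show mbtMemF (mbtDec 542 2) = ({b01} : Set TwoBit)
    ext t
    simp only [mbtMemF, Set.mem_setOf_eq, Set.mem_insert_iff, Set.mem_singleton_iff]
    revert t
    decide

lemma mbtE2 : mbtM (mbtDec 557) = ![{b00, b10, b11}, {b01}, {b01}] := by
  funext j
  fin_cases j
  · show mbtMemF (mbtDec 557 0) = ({b00, b10, b11} : Set TwoBit)
    ext t
    simp only [mbtMemF, Set.mem_setOf_eq, Set.mem_insert_iff, Set.mem_singleton_iff]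
    revert t
    decide
  · show mbtMemF (mbtDec 557 1) = ({b01} : Set TwoBit)
    ext t
    simp only [mbtMemF, Set.mem_setOf_eq, Set.mem_insert_iff, Set.mem_singleton_iff]
    revert t
    decide
  · show mbtMemF (mbtDec 557 2) = ({b01} : Set TwoBit)
    ext t
    simp only [mbtMemF, Set.mem_setOf_eq, Set.mem_insert_iff, Set.mem_singleton_iff]
    revert t
    decide

lemma mbtE3 : mbtM (mbtDec 1051) = ![{b00, b01, b11}, {b00}, {b10}] := by
  funext j
  fin_cases j
  · show mbtMemF (mbtDec 1051 0) = ({b00, b01, b11} : Set TwoBit)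
    ext t
    simp only [mbtMemF, Set.mem_setOf_eq, Set.mem_insert_iff, Set.mem_singleton_iff]
    revert t
    decide
  · show mbtMemF (mbtDec 1051 1) = ({b00} : Set TwoBit)
    ext t
    simp only [mbtMemF, Set.mem_setOf_eq, Set.mem_insert_iff, Set.mem_singleton_iff]
    revert t
    decide
  · show mbtMemF (mbtDec 1051 2) = ({b10} : Set TwoBit)
    ext t
    simp only [mbtMemF, Set.mem_setOf_eq, Set.mem_insert_iff, Set.mem_singleton_iff]
    revert t
    decide

lemma mbtE4 : mbtM (mbtDec 2071) = ![{b00, b01, b10}, {b00}, {b11}] := by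
  funext j
  fin_cases j
  · show mbtMemF (mbtDec 2071 0) = ({b00, b01, b10} : Set TwoBit)
    ext t
    simp only [mbtMemF, Set.mem_setOf_eq, Set.mem_insert_iff, Set.mem_singleton_iff]
    revert t
    decide
  · show mbtMemF (mbtDec 2071 1) = ({b00} : Set TwoBit)
    ext t
    simp only [mbtMemF, Set.mem_setOf_eq, Set.mem_insert_iff, Set.mem_singleton_iff]
    revert t
    decide
  · show mbtMemF (mbtDec 2071 2) = ({b11} : Set TwoBit)
    ext t
    simp only [mbtMemF, Set.mem_setOf_eq, Set.mem_insert_iff, Set.mem_singleton_iff]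
    revert t
    decide

lemma mbtE5 : mbtM (mbtDec 1063) = ![{b00, b01, b10}, {b01}, {b10}] := by
  funext j
  fin_cases j
  · show mbtMemF (mbtDec 1063 0) = ({b00, b01, b10} : Set TwoBit)
    ext t
    simp only [mbtMemF, Set.mem_setOf_eq, Set.mem_insert_iff, Set.mem_singleton_iff]
    revert t
    decide
  · show mbtMemF (mbtDec 1063 1) = ({b01} : Set TwoBit)
    ext t
    simp only [mbtMemF, Set.mem_setOf_eq, Set.mem_insert_iff, Set.mem_singleton_iff]
    revert t
    decide
  · show mbtMemF (mbtDec 1063 2) = ({b10} : Set TwoBit)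
    ext t
    simp only [mbtMemF, Set.mem_setOf_eq, Set.mem_insert_iff, Set.mem_singleton_iff]
    revert t
    decide

lemma mbtE6 : mbtM (mbtDec 2091) = ![{b00, b01, b11}, {b01}, {b11}] := by
  funext j
  fin_cases j
  · show mbtMemF (mbtDec 2091 0) = ({b00, b01, b11} : Set TwoBit)
    ext t
    simp only [mbtMemF, Set.mem_setOf_eq, Set.mem_insert_iff, Set.mem_singleton_iff]
    revert t
    decide
  · show mbtMemF (mbtDec 2091 1) = ({b01} : Set TwoBit)
    ext t
    simp only [mbtMemF, Set.mem_setOf_eq, Set.mem_insert_iff, Set.mem_singleton_iff]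
    revert t
    decide
  · show mbtMemF (mbtDec 2091 2) = ({b11} : Set TwoBit)
    ext t
    simp only [mbtMemF, Set.mem_setOf_eq, Set.mem_insert_iff, Set.mem_singleton_iff]
    revert t
    decide

lemma mbtE7 : mbtM (mbtDec 1102) = ![{b01, b10, b11}, {b10}, {b10}] := by
  funext j
  fin_cases j
  · show mbtMemF (mbtDec 1102 0) = ({b01, b10, b11} : Set TwoBit)
    ext t
    simp only [mbtMemF, Set.mem_setOf_eq, Set.mem_insert_iff, Set.mem_singleton_iff]
    revert t
    decide
  · show mbtMemF (mbtDec 1102 1) = ({b10} : Set TwoBit)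
    ext t
    simp only [mbtMemF, Set.mem_setOf_eq, Set.mem_insert_iff, Set.mem_singleton_iff]
    revert t
    decide
  · show mbtMemF (mbtDec 1102 2) = ({b10} : Set TwoBit)
    ext t
    simp only [mbtMemF, Set.mem_setOf_eq, Set.mem_insert_iff, Set.mem_singleton_iff]
    revert t
    decide

lemma mbtE8 : mbtM (mbtDec 2125) = ![{b00, b10, b11}, {b10}, {b11}] := by
  funext j
  fin_cases j
  · show mbtMemF (mbtDec 2125 0) = ({b00, b10, b11} : Set TwoBit)
    ext t
    simp only [mbtMemF, Set.mem_setOf_eq, Set.mem_insert_iff, Set.mem_singleton_iff]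
    revert t
    decide
  · show mbtMemF (mbtDec 2125 1) = ({b10} : Set TwoBit)
    ext t
    simp only [mbtMemF, Set.mem_setOf_eq, Set.mem_insert_iff, Set.mem_singleton_iff]
    revert t
    decide
  · show mbtMemF (mbtDec 2125 2) = ({b11} : Set TwoBit)
    ext t
    simp only [mbtMemF, Set.mem_setOf_eq, Set.mem_insert_iff, Set.mem_singleton_iff]
    revert t
    decide

lemma mbtE9 : mbtM (mbtDec 2190) = ![{b01, b10, b11}, {b11}, {b11}] := by
  funext j
  fin_cases j
  · show mbtMemF (mbtDec 2190 0) = ({b01, b10, b11} : Set TwoBit)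
    ext t
    simp only [mbtMemF, Set.mem_setOf_eq, Set.mem_insert_iff, Set.mem_singleton_iff]
    revert t
    decide
  · show mbtMemF (mbtDec 2190 1) = ({b11} : Set TwoBit)
    ext t
    simp only [mbtMemF, Set.mem_setOf_eq, Set.mem_insert_iff, Set.mem_singleton_iff]
    revert t
    decide
  · show mbtMemF (mbtDec 2190 2) = ({b11} : Set TwoBit)
    ext t
    simp only [mbtMemF, Set.mem_setOf_eq, Set.mem_insert_iff, Set.mem_singleton_iff]
    revert t
    decide

lemma mbtE10 : mbtM (mbtDec 2325) = ![{b00, b10}, {b00}, {b00, b11}] := by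
  funext j
  fin_cases j
  · show mbtMemF (mbtDec 2325 0) = ({b00, b10} : Set TwoBit)
    ext t
    simp only [mbtMemF, Set.mem_setOf_eq, Set.mem_insert_iff, Set.mem_singleton_iff]
    revert t
    decide
  · show mbtMemF (mbtDec 2325 1) = ({b00} : Set TwoBit)
    ext t
    simp only [mbtMemF, Set.mem_setOf_eq, Set.mem_insert_iff, Set.mem_singleton_iff]
    revert t
    decide
  · show mbtMemF (mbtDec 2325 2) = ({b00, b11} : Set TwoBit)
    ext t
    simp only [mbtMemF, Set.mem_setOf_eq, Set.mem_insert_iff, Set.mem_singleton_iff]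
    revert t
    decide

lemma mbtE11 : mbtM (mbtDec 1562) = ![{b01, b11}, {b00}, {b01, b10}] := by
  funext j
  fin_cases j
  · show mbtMemF (mbtDec 1562 0) = ({b01, b11} : Set TwoBit)
    ext t
    simp only [mbtMemF, Set.mem_setOf_eq, Set.mem_insert_iff, Set.mem_singleton_iff]
    revert t
    decide
  · show mbtMemF (mbtDec 1562 1) = ({b00} : Set TwoBit)
    ext t
    simp only [mbtMemF, Set.mem_setOf_eq, Set.mem_insert_iff, Set.mem_singleton_iff]
    revert t
    decide
  · show mbtMemF (mbtDec 1562 2) = ({b01, b10} : Set TwoBit)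
    ext t
    simp only [mbtMemF, Set.mem_setOf_eq, Set.mem_insert_iff, Set.mem_singleton_iff]
    revert t
    decide

lemma mbtE12 : mbtM (mbtDec 1573) = ![{b00, b10}, {b01}, {b01, b10}] := by
  funext j
  fin_cases j
  · show mbtMemF (mbtDec 1573 0) = ({b00, b10} : Set TwoBit)
    ext t
    simp only [mbtMemF, Set.mem_setOf_eq, Set.mem_insert_iff, Set.mem_singleton_iff]
    revert t
    decide
  · show mbtMemF (mbtDec 1573 1) = ({b01} : Set TwoBit)
    ext t
    simp only [mbtMemF, Set.mem_setOf_eq, Set.mem_insert_iff, Set.mem_singleton_iff]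
    revert t
    decide
  · show mbtMemF (mbtDec 1573 2) = ({b01, b10} : Set TwoBit)
    ext t
    simp only [mbtMemF, Set.mem_setOf_eq, Set.mem_insert_iff, Set.mem_singleton_iff]
    revert t
    decide

lemma mbtE13 : mbtM (mbtDec 666) = ![{b01, b11}, {b00, b11}, {b01}] := by
  funext j
  fin_cases j
  · show mbtMemF (mbtDec 666 0) = ({b01, b11} : Set TwoBit)
    ext t
    simp only [mbtMemF, Set.mem_setOf_eq, Set.mem_insert_iff, Set.mem_singleton_iff]
    revert t
    decide
  · show mbtMemF (mbtDec 666 1) = ({b00, b11} : Set TwoBit)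
    ext t
    simp only [mbtMemF, Set.mem_setOf_eq, Set.mem_insert_iff, Set.mem_singleton_iff]
    revert t
    decide
  · show mbtMemF (mbtDec 666 2) = ({b01} : Set TwoBit)
    ext t
    simp only [mbtMemF, Set.mem_setOf_eq, Set.mem_insert_iff, Set.mem_singleton_iff]
    revert t
    decide

lemma mbtE14 : mbtM (mbtDec 1189) = ![{b00, b10}, {b01, b11}, {b10}] := by
  funext j
  fin_cases j
  · show mbtMemF (mbtDec 1189 0) = ({b00, b10} : Set TwoBit)
    ext t
    simp only [mbtMemF, Set.mem_setOf_eq, Set.mem_insert_iff, Set.mem_singleton_iff]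
    revert t
    decide
  · show mbtMemF (mbtDec 1189 1) = ({b01, b11} : Set TwoBit)
    ext t
    simp only [mbtMemF, Set.mem_setOf_eq, Set.mem_insert_iff, Set.mem_singleton_iff]
    revert t
    decide
  · show mbtMemF (mbtDec 1189 2) = ({b10} : Set TwoBit)
    ext t
    simp only [mbtMemF, Set.mem_setOf_eq, Set.mem_insert_iff, Set.mem_singleton_iff]
    revert t
    decide

lemma mbtE15 : mbtM (mbtDec 1368) = ![{b11}, {b00, b10}, {b00, b10}] := by
  funext j
  fin_cases j
  · show mbtMemF (mbtDec 1368 0) = ({b11} : Set TwoBit)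
    ext t
    simp only [mbtMemF, Set.mem_setOf_eq, Set.mem_insert_iff, Set.mem_singleton_iff]
    revert t
    decide
  · show mbtMemF (mbtDec 1368 1) = ({b00, b10} : Set TwoBit)
    ext t
    simp only [mbtMemF, Set.mem_setOf_eq, Set.mem_insert_iff, Set.mem_singleton_iff]
    revert t
    decide
  · show mbtMemF (mbtDec 1368 2) = ({b00, b10} : Set TwoBit)
    ext t
    simp only [mbtMemF, Set.mem_setOf_eq, Set.mem_insert_iff, Set.mem_singleton_iff]
    revert t
    decide

lemma mbtE16 : mbtM (mbtDec 1636) = ![{b10}, {b01, b10}, {b01, b10}] := by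
  funext j
  fin_cases j
  · show mbtMemF (mbtDec 1636 0) = ({b10} : Set TwoBit)
    ext t
    simp only [mbtMemF, Set.mem_setOf_eq, Set.mem_insert_iff, Set.mem_singleton_iff]
    revert t
    decide
  · show mbtMemF (mbtDec 1636 1) = ({b01, b10} : Set TwoBit)
    ext t
    simp only [mbtMemF, Set.mem_setOf_eq, Set.mem_insert_iff, Set.mem_singleton_iff]
    revert t
    decide
  · show mbtMemF (mbtDec 1636 2) = ({b01, b10} : Set TwoBit)
    ext t
    simp only [mbtMemF, Set.mem_setOf_eq, Set.mem_insert_iff, Set.mem_singleton_iff]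
    revert t
    decide

lemma mbtE17 : mbtM (mbtDec 2452) = ![{b10}, {b00, b11}, {b00, b11}] := by
  funext j
  fin_cases j
  · show mbtMemF (mbtDec 2452 0) = ({b10} : Set TwoBit)
    ext t
    simp only [mbtMemF, Set.mem_setOf_eq, Set.mem_insert_iff, Set.mem_singleton_iff]
    revert t
    decide
  · show mbtMemF (mbtDec 2452 1) = ({b00, b11} : Set TwoBit)
    ext t
    simp only [mbtMemF, Set.mem_setOf_eq, Set.mem_insert_iff, Set.mem_singleton_iff]
    revert t
    decide
  · show mbtMemF (mbtDec 2452 2) = ({b00, b11} : Set TwoBit)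
    ext t
    simp only [mbtMemF, Set.mem_setOf_eq, Set.mem_insert_iff, Set.mem_singleton_iff]
    revert t
    decide

lemma mbtE18 : mbtM (mbtDec 2153) = ![{b00, b11}, {b01, b10}, {b11}] := by
  funext j
  fin_cases j
  · show mbtMemF (mbtDec 2153 0) = ({b00, b11} : Set TwoBit)
    ext t
    simp only [mbtMemF, Set.mem_setOf_eq, Set.mem_insert_iff, Set.mem_singleton_iff]
    revert t
    decide
  · show mbtMemF (mbtDec 2153 1) = ({b01, b10} : Set TwoBit)
    ext t
    simp only [mbtMemF, Set.mem_setOf_eq, Set.mem_insert_iff, Set.mem_singleton_iff]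
    revert t
    decide
  · show mbtMemF (mbtDec 2153 2) = ({b11} : Set TwoBit)
    ext t
    simp only [mbtMemF, Set.mem_setOf_eq, Set.mem_insert_iff, Set.mem_singleton_iff]
    revert t
    decide

lemma mbtE19 : mbtM (mbtDec 2728) = ![{b11}, {b01, b11}, {b01, b11}] := by
  funext j
  fin_cases j
  · show mbtMemF (mbtDec 2728 0) = ({b11} : Set TwoBit)
    ext t
    simp only [mbtMemF, Set.mem_setOf_eq, Set.mem_insert_iff, Set.mem_singleton_iff]
    revert t
    decide
  · show mbtMemF (mbtDec 2728 1) = ({b01, b11} : Set TwoBit)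
    ext t
    simp only [mbtMemF, Set.mem_setOf_eq, Set.mem_insert_iff, Set.mem_singleton_iff]
    revert t
    decide
  · show mbtMemF (mbtDec 2728 2) = ({b01, b11} : Set TwoBit)
    ext t
    simp only [mbtMemF, Set.mem_setOf_eq, Set.mem_insert_iff, Set.mem_singleton_iff]
    revert t
    decide

lemma mbtE20 : mbtM (mbtDec 828) = ![{b10, b11}, {b00, b01}, {b00, b01}] := by
  funext j
  fin_cases j
  · show mbtMemF (mbtDec 828 0) = ({b10, b11} : Set TwoBit)
    ext t
    simp only [mbtMemF, Set.mem_setOf_eq, Set.mem_insert_iff, Set.mem_singleton_iff]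
    revert t
    decide
  · show mbtMemF (mbtDec 828 1) = ({b00, b01} : Set TwoBit)
    ext t
    simp only [mbtMemF, Set.mem_setOf_eq, Set.mem_insert_iff, Set.mem_singleton_iff]
    revert t
    decide
  · show mbtMemF (mbtDec 828 2) = ({b00, b01} : Set TwoBit)
    ext t
    simp only [mbtMemF, Set.mem_setOf_eq, Set.mem_insert_iff, Set.mem_singleton_iff]
    revert t
    decide

lemma mbtE21 : mbtM (mbtDec 3276) = ![{b10, b11}, {b10, b11}, {b10, b11}] := by
  funext j
  fin_cases j
  · show mbtMemF (mbtDec 3276 0) = ({b10, b11} : Set TwoBit)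
    ext t
    simp only [mbtMemF, Set.mem_setOf_eq, Set.mem_insert_iff, Set.mem_singleton_iff]
    revert t
    decide
  · show mbtMemF (mbtDec 3276 1) = ({b10, b11} : Set TwoBit)
    ext t
    simp only [mbtMemF, Set.mem_setOf_eq, Set.mem_insert_iff, Set.mem_singleton_iff]
    revert t
    decide
  · show mbtMemF (mbtDec 3276 2) = ({b10, b11} : Set TwoBit)
    ext t
    simp only [mbtMemF, Set.mem_setOf_eq, Set.mem_insert_iff, Set.mem_singleton_iff]
    revert t
    decide

lemma mbtMapEq : bitTriples = mbtKeys.map (fun k => mbtM (mbtDec k)) := by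
  simp only [bitTriples, mbtKeys, List.map_cons, List.map_nil,
    mbtE0, mbtE1, mbtE2, mbtE3, mbtE4, mbtE5, mbtE6, mbtE7, mbtE8, mbtE9, mbtE10, mbtE11, mbtE12, mbtE13, mbtE14, mbtE15, mbtE16, mbtE17, mbtE18, mbtE19, mbtE20, mbtE21]

lemma mbtMInj : Function.Injective mbtM := by
  intro a b h
  funext j t
  have h3 := Set.ext_iff.mp (congrFun h j) t
  simp only [mbtM, mbtMemF, Set.mem_setOf_eq] at h3
  cases ha : a j t <;> cases hb : b j t <;> simp [ha, hb] at h3 <;> try rfl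
  all_goals simp_all

def mbtS0 : Equiv.Perm (Fin 3) :=
  ⟨![0,1,2], ![0,1,2], by intro x; fin_cases x <;> rfl, by intro x; fin_cases x <;> rfl⟩
def mbtS1 : Equiv.Perm (Fin 3) :=
  ⟨![0,2,1], ![0,2,1], by intro x; fin_cases x <;> rfl, by intro x; fin_cases x <;> rfl⟩
def mbtS2 : Equiv.Perm (Fin 3) :=
  ⟨![1,0,2], ![1,0,2], by intro x; fin_cases x <;> rfl, by intro x; fin_cases x <;> rfl⟩
def mbtS3 : Equiv.Perm (Fin 3) :=
  ⟨![1,2,0], ![2,0,1], by intro x; fin_cases x <;> rfl, by intro x; fin_cases x <;> rfl⟩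
def mbtS4 : Equiv.Perm (Fin 3) :=
  ⟨![2,0,1], ![1,2,0], by intro x; fin_cases x <;> rfl, by intro x; fin_cases x <;> rfl⟩
def mbtS5 : Equiv.Perm (Fin 3) :=
  ⟨![2,1,0], ![2,1,0], by intro x; fin_cases x <;> rfl, by intro x; fin_cases x <;> rfl⟩

lemma mbtPermLift : ∀ p ∈ mbtPerms, ∃ ρ : Equiv.Perm (Fin 3), ⇑ρ = p := by
  intro p hp
  fin_cases hp
  exacts [⟨mbtS0, rfl⟩, ⟨mbtS1, rfl⟩, ⟨mbtS2, rfl⟩, ⟨mbtS3, rfl⟩, ⟨mbtS4, rfl⟩, ⟨mbtS5, rfl⟩]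


theorem maximal_bit_triples_classification (S : Fin 3 → Set TwoBit)
    (hne : ∀ j, (S j).Nonempty) :
    (bitUQ S ∧
        ¬ ∃ S' : Fin 3 → Set TwoBit,
            bitUQ S' ∧ (∀ j, S j ⊆ S' j) ∧ (∃ j, S j ⊂ S' j)) ↔
      ∃ ρ : Equiv.Perm (Fin 3), (fun j => S (ρ j)) ∈ bitTriples := by
  classical
  set F : Fin 3 → TwoBit → Bool := fun j t => decide (t ∈ S j) with hF
  have hS : ∀ j, S j = mbtMemF (F j) := by
    intro j
    ext t
    simp [mbtMemF, hF]
  have hSm : ∀ (G : Fin 3 → TwoBit → Bool) (i : Fin 3) (s : TwoBit),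
      s ∈ mbtM G i ↔ G i s = true := fun _ _ _ => Iff.rfl
  -- nonemptiness
  have hNE : mbtNE F := by
    intro j
    obtain ⟨t, ht⟩ := hne j
    exact ⟨t, by rw [hS j] at ht; exact ht⟩
  -- UQ bridge (generic)
  have hUQm : ∀ G : Fin 3 → TwoBit → Bool, bitUQ (mbtM G) ↔ mbtUQ G := by
    intro G
    constructor
    · intro h l₁ l₂ l₃ m₁ m₂ m₃
      exact h l₁ m₁ l₂ m₂ l₃ m₃
    · intro h l₁ m₁ l₂ m₂ l₃ m₃
      exact h l₁ l₂ l₃ m₁ m₂ m₃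
  have hSfun : S = mbtM F := funext hS
  have h1 : bitUQ S ↔ mbtUQ F := by rw [hSfun]; exact hUQm F
  -- maximality bridge
  have h2 : (¬ ∃ S' : Fin 3 → Set TwoBit,
      bitUQ S' ∧ (∀ j, S j ⊆ S' j) ∧ (∃ j, S j ⊂ S' j)) ↔ mbtMX F := by
    constructor
    · intro hno j t hft
      intro huq
      apply hno
      refine ⟨mbtM (mbtAdd F j t), (hUQm _).mpr huq, ?_, j, ?_⟩
      · intro i s hs
        rw [hS i] at hs
        show mbtAdd F j t i s = true
        simp only [mbtAdd]
        rw [show F i s = true from hs]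
        rfl
      · rw [Set.ssubset_iff_of_subset]
        · refine ⟨t, ?_, ?_⟩
          · show mbtAdd F j t j t = true
            simp [mbtAdd]
          · rw [hS j]
            intro hmem
            have hmt : F j t = true := hmem
            rw [hmt] at hft
            cases hft
        · intro s hs
          rw [hS j] at hs
          show mbtAdd F j t j s = true
          simp only [mbtAdd]
          rw [show F j s = true from hs]
          rfl
    · rintro hmx ⟨S', huq', hsub, j, hss⟩
      obtain ⟨t, htS', htS⟩ := Set.exists_of_ssubset hss
      have hft : F j t = false := by
        rw [hS j] at htS
        simpa [mbtMemF] using htS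
      apply hmx j t hft
      have hmem : ∀ (i : Fin 3) (s : TwoBit), mbtAdd F j t i s = true → s ∈ S' i := by
        intro i s h
        simp only [mbtAdd, Bool.or_eq_true, Bool.and_eq_true, decide_eq_true_eq] at h
        rcases h with h | ⟨rfl, rfl⟩
        · exact hsub i (by rw [hS i]; exact h)
        · exact htS'
      exact fun l₁ l₂ l₃ m₁ m₂ m₃ =>
        huq' l₁ (hmem 0 l₁ m₁) l₂ (hmem 1 l₂ m₂) l₃ (hmem 2 l₃ m₃)
  -- RHS bridge
  have h3 : (∃ ρ : Equiv.Perm (Fin 3), (fun j => S (ρ j)) ∈ bitTriples) ↔ mbtDF F := by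
    constructor
    · rintro ⟨ρ, hρ⟩
      have hpm : ⇑ρ ∈ mbtPerms := mbtPerm_mem _ (fun a b h => ρ.injective h)
      have hfun : (fun j => S (ρ j)) = mbtM (fun j => F (ρ j)) := funext fun j => hS (ρ j)
      rw [hfun, mbtMapEq, List.mem_map] at hρ
      obtain ⟨k, hk, he⟩ := hρ
      exact ⟨⇑ρ, hpm, k, hk, (mbtMInj he).symm⟩
    · rintro ⟨p, hp, k, hk, he⟩
      obtain ⟨ρ, hρ⟩ := mbtPermLift p hp
      refine ⟨ρ, ?_⟩
      have hfun : (fun j => S (ρ j)) = mbtM (fun j => F (p j)) := by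
        funext j
        rw [hS (ρ j), hρ]
        rfl
      rw [hfun, he, mbtMapEq]
      exact List.mem_map_of_mem (f := fun k => mbtM (mbtDec k)) hk
  rw [h1, h2, h3]
  exact mbtCoreF F hNE
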